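/- The operator A admits the expansion A = γ•(1₂⊗1₂⊗1₂) + δ•(σ⊗σ⊗1₂) + δ•(σ⊗1₂⊗σ) + η•(1₂⊗σ⊗σ), where γ = K₀²*R₀ + K₃²*R₃ = (1/4)*(exp((J+2)*β) + exp(J*β) + 2*exp β), δ = K₀*K₃*(R₀ + R₃) = (1/4)*exp(J*β)*(exp(2*β) − 1), and η = K₀²*R₃ + K₃²*R₀ = (1/4)*(exp((J+2)*β) + exp(J*β) − 2*exp β). -/
import Mathlib


open Matrix Kronecker

noncomputable section

/-- The Pauli z-matrix. -/
def σz : Matrix (Fin 2) (Fin 2) ℂ := !![1, 0; 0, -1]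

/-- The threefold tensor product `M₂ ⊗ M₂ ⊗ M₂`, realized via Kronecker products. -/
abbrev M3 : Type := Matrix (Fin 2 × Fin 2 × Fin 2) (Fin 2 × Fin 2 × Fin 2) ℂ

/-- `tp a b c` is the elementary tensor `a ⊗ b ⊗ c` in `M₂ ⊗ M₂ ⊗ M₂`. -/
def tp (a b c : Matrix (Fin 2) (Fin 2) ℂ) : M3 := a ⊗ₖ (b ⊗ₖ c)

def K₀ (β : ℝ) : ℝ := (Real.exp β + 1) / 2
def K₃ (β : ℝ) : ℝ := (Real.exp β - 1) / 2
def R₀ (β J : ℝ) : ℝ := (Real.exp (J * β) + 1) / 2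
def R₃ (β J : ℝ) : ℝ := (Real.exp (J * β) - 1) / 2

/-- `K¹² = K₀•(1⊗1⊗1) + K₃•(σ⊗σ⊗1)`. -/
def K12 (β : ℝ) : M3 := ((K₀ β : ℝ) : ℂ) • tp 1 1 1 + ((K₃ β : ℝ) : ℂ) • tp σz σz 1

/-- `K¹³ = K₀•(1⊗1⊗1) + K₃•(σ⊗1⊗σ)`. -/
def K13 (β : ℝ) : M3 := ((K₀ β : ℝ) : ℂ) • tp 1 1 1 + ((K₃ β : ℝ) : ℂ) • tp σz 1 σz

/-- `L²³ = R₀•(1⊗1⊗1) + R₃•(1⊗σ⊗σ)`. -/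
def L23 (β J : ℝ) : M3 := ((R₀ β J : ℝ) : ℂ) • tp 1 1 1 + ((R₃ β J : ℝ) : ℂ) • tp 1 σz σz

/-- The transfer operator `A = K¹² K¹³ L²³` of the Ising model with competing interactions. -/
def A (β J : ℝ) : M3 := K12 β * K13 β * L23 β J

def γc (β J : ℝ) : ℝ := (K₀ β) ^ 2 * R₀ β J + (K₃ β) ^ 2 * R₃ β J
def δc (β J : ℝ) : ℝ := K₀ β * K₃ β * (R₀ β J + R₃ β J)
def ηc (β J : ℝ) : ℝ := (K₀ β) ^ 2 * R₃ β J + (K₃ β) ^ 2 * R₀ β J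

/-- The expansion `A = γ•(1⊗1⊗1) + δ•(σ⊗σ⊗1) + δ•(σ⊗1⊗σ) + η•(1⊗σ⊗σ)`, together with
the explicit values of the coefficients `γ, δ, η`. -/
lemma σz_sq : σz * σz = 1 := by
  simp [σz]
  ext i j
  fin_cases i <;> fin_cases j <;> simp [Matrix.mul_apply, Fin.sum_univ_two, Matrix.one_apply]

lemma tp_mul (a b c d e f : Matrix (Fin 2) (Fin 2) ℂ) :
    tp a b c * tp d e f = tp (a * d) (b * e) (c * f) := by
  simp [tp, Matrix.mul_kronecker_mul]

lemma exp_key (β J : ℝ) : Real.exp ((J + 2) * β) = Real.exp (J * β) * Real.exp β ^ 2 := by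
  rw [add_mul, Real.exp_add, two_mul, Real.exp_add, sq]

theorem transfer_operator_expansion' (β J : ℝ) :
    A β J = ((γc β J : ℝ) : ℂ) • tp 1 1 1 + ((δc β J : ℝ) : ℂ) • tp σz σz 1 +
        ((δc β J : ℝ) : ℂ) • tp σz 1 σz + ((ηc β J : ℝ) : ℂ) • tp 1 σz σz ∧
      γc β J = (1 / 4) * (Real.exp ((J + 2) * β) + Real.exp (J * β) + 2 * Real.exp β) ∧
      δc β J = (1 / 4) * Real.exp (J * β) * (Real.exp (2 * β) - 1) ∧
      ηc β J = (1 / 4) * (Real.exp ((J + 2) * β) + Real.exp (J * β) - 2 * Real.exp β) := by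
  refine ⟨?_, ?_, ?_, ?_⟩
  · simp only [A, K12, K13, L23, mul_add, add_mul, smul_mul_smul_comm, tp_mul, σz_sq,
      one_mul, mul_one, γc, δc, ηc]
    push_cast
    module
  · rw [γc, K₀, K₃, R₀, R₃, exp_key]
    ring
  · rw [δc, K₀, K₃, R₀, R₃, two_mul, Real.exp_add]; ring
  · rw [ηc, K₀, K₃, R₀, R₃, exp_key]; ring


theorem transfer_operator_expansion (β J : ℝ) (hβ : 0 < β) (hJ : 0 < J) :
    A β J = ((γc β J : ℝ) : ℂ) • tp 1 1 1 + ((δc β J : ℝ) : ℂ) • tp σz σz 1 +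
        ((δc β J : ℝ) : ℂ) • tp σz 1 σz + ((ηc β J : ℝ) : ℂ) • tp 1 σz σz ∧
      γc β J = (1 / 4) * (Real.exp ((J + 2) * β) + Real.exp (J * β) + 2 * Real.exp β) ∧
      δc β J = (1 / 4) * Real.exp (J * β) * (Real.exp (2 * β) - 1) ∧
      ηc β J = (1 / 4) * (Real.exp ((J + 2) * β) + Real.exp (J * β) - 2 * Real.exp β) := by
  exact transfer_operator_expansion' β J
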